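/- For n ≥ 3, the function r ↦ (∫₀^r (sin τ)^{n-1} dτ)^{2/n} · ((sin r)^{n-1})^{-1/(n-1)} is monotonically increasing on (0, π/2). -/

import Mathlib

open Real

open intervalIntegral MeasureTheory

lemma aux_int (m : ℕ) (r : ℝ) :
    ∫ τ in (0:ℝ)..r, sin τ ^ m * cos τ = sin r ^ (m + 1) / (m + 1) := by
  have h := integral_sin_pow_mul_cos_pow_odd (a := 0) (b := r) m 0
  simp only [pow_zero, mul_zero, zero_add, pow_one, mul_one] at h
  rw [h]
  simp [integral_pow, Real.sin_zero]

lemma key_bound (n : ℕ) (hn : 1 ≤ n) {r : ℝ} (hr : r ∈ Set.Ioo 0 (π / 2)) :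
    (∫ τ in (0:ℝ)..r, sin τ ^ (n - 1)) ≤ sin r ^ n / (n * cos r) := by
  obtain ⟨hr0, hr2⟩ := hr
  have hC : 0 < cos r := Real.cos_pos_of_mem_Ioo ⟨by linarith [pi_pos], hr2⟩
  have hcont : Continuous fun τ : ℝ => sin τ ^ (n - 1) := by fun_prop
  have hcont2 : Continuous fun τ : ℝ => (cos r)⁻¹ * (sin τ ^ (n - 1) * cos τ) := by fun_prop
  have hle : ∀ τ ∈ Set.Icc (0:ℝ) r, sin τ ^ (n - 1) ≤ (cos r)⁻¹ * (sin τ ^ (n - 1) * cos τ) := by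
    intro τ ⟨h0, h1⟩
    have hs : 0 ≤ sin τ ^ (n - 1) := pow_nonneg (Real.sin_nonneg_of_nonneg_of_le_pi h0 (by linarith [pi_pos])) _
    have hcc : cos r ≤ cos τ := Real.cos_le_cos_of_nonneg_of_le_pi h0 (by linarith [pi_pos]) h1
    calc sin τ ^ (n - 1) = (cos r)⁻¹ * (sin τ ^ (n - 1) * cos r) := by field_simp
      _ ≤ (cos r)⁻¹ * (sin τ ^ (n - 1) * cos τ) := by
          gcongr
  have := intervalIntegral.integral_mono_on (μ := volume) hr0.le
    (hcont.intervalIntegrable _ _) (hcont2.intervalIntegrable _ _) hle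
  refine this.trans ?_
  rw [intervalIntegral.integral_const_mul, aux_int, Nat.sub_add_cancel hn]
  have : ((n - 1 : ℕ) : ℝ) + 1 = n := by
    have := Nat.cast_sub hn (R := ℝ); push_cast [this]; ring
  rw [this]
  apply le_of_eq
  field_simp

/-- For `n ≥ 3`, the function `r ↦ A(r)^(2/n) * B(r)^(-1/(n-1))`, where
`A(r) = ∫₀^r (sin τ)^(n-1) dτ` and `B(r) = (sin r)^(n-1)`, is monotonically
increasing (nondecreasing) on `(0, π/2)`. -/
theorem monotoneOn_integral_sin_pow_ratio (n : ℕ) (hn : 3 ≤ n) :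
    MonotoneOn (fun r : ℝ =>
      (∫ τ in (0:ℝ)..r, Real.sin τ ^ (n - 1)) ^ ((2 : ℝ) / (n : ℝ)) *
        (Real.sin r ^ (n - 1)) ^ (-(1 : ℝ) / ((n : ℝ) - 1)))
      (Set.Ioo 0 (π / 2)) := by
  have hn1 : 1 ≤ n := by omega
  have hnR : (1:ℝ) < (n:ℝ) := by exact_mod_cast (by omega : 1 < n)
  have hcast : ((n - 1 : ℕ) : ℝ) = (n:ℝ) - 1 := by
    push_cast [Nat.cast_sub hn1]; ring
  set A : ℝ → ℝ := fun r => ∫ τ in (0:ℝ)..r, sin τ ^ (n - 1) with hA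
  set p : ℝ := (2:ℝ) / n with hp
  have hcontI : Continuous fun τ : ℝ => sin τ ^ (n - 1) := by fun_prop
  -- the simplified function
  set g : ℝ → ℝ := fun r => A r ^ p * (sin r)⁻¹ with hg
  have hEq : Set.EqOn (fun r : ℝ =>
      (∫ τ in (0:ℝ)..r, Real.sin τ ^ (n - 1)) ^ ((2 : ℝ) / (n : ℝ)) *
        (Real.sin r ^ (n - 1)) ^ (-(1 : ℝ) / ((n : ℝ) - 1))) g (Set.Ioo 0 (π/2)) := by
    intro r hr
    have hs : 0 < sin r := Real.sin_pos_of_pos_of_lt_pi hr.1 (by linarith [hr.2, pi_pos])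
    simp only [hg]
    congr 1
    rw [← Real.rpow_natCast (sin r) (n-1), ← Real.rpow_mul hs.le, hcast]
    rw [show ((n:ℝ) - 1) * (-(1:ℝ) / ((n:ℝ) - 1)) = -1 by
      rw [mul_comm]; exact div_mul_cancel₀ (-1) (by linarith)]
    exact Real.rpow_neg_one _
  refine MonotoneOn.congr ?_ hEq.symm
  -- derivative data
  have hAderiv : ∀ r ∈ Set.Ioo (0:ℝ) (π/2), HasDerivAt A (sin r ^ (n-1)) r := by
    intro r hr
    exact intervalIntegral.integral_hasDerivAt_right
      (hcontI.intervalIntegrable _ _)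
      (hcontI.stronglyMeasurableAtFilter _ _)
      hcontI.continuousAt
  have hApos : ∀ r ∈ Set.Ioo (0:ℝ) (π/2), 0 < A r := by
    intro r hr
    apply intervalIntegral.intervalIntegral_pos_of_pos_on
      (hcontI.intervalIntegrable _ _) _ hr.1
    intro x hx
    exact pow_pos (Real.sin_pos_of_pos_of_lt_pi hx.1
      (by linarith [hr.2, hx.2, pi_pos])) _
  have hDeriv : ∀ r ∈ Set.Ioo (0:ℝ) (π/2), HasDerivAt g
      ((sin r ^ (n-1)) * p * A r ^ (p - 1) * (sin r)⁻¹ +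
        A r ^ p * (-(cos r) / sin r ^ 2)) r := by
    intro r hr
    have hs : 0 < sin r := Real.sin_pos_of_pos_of_lt_pi hr.1 (by linarith [hr.2, pi_pos])
    have h1 : HasDerivAt (fun r => A r ^ p) ((sin r ^ (n-1)) * p * A r ^ (p - 1)) r :=
      (hAderiv r hr).rpow_const (Or.inl (hApos r hr).ne')
    have h2 : HasDerivAt (fun r => (sin r)⁻¹) (-(cos r) / sin r ^ 2) r :=
      (Real.hasDerivAt_sin r).inv hs.ne'
    exact h1.mul h2
  have hDnonneg : ∀ r ∈ Set.Ioo (0:ℝ) (π/2),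
      0 ≤ (sin r ^ (n-1)) * p * A r ^ (p - 1) * (sin r)⁻¹ +
        A r ^ p * (-(cos r) / sin r ^ 2) := by
    intro r hr
    have hs : 0 < sin r := Real.sin_pos_of_pos_of_lt_pi hr.1 (by linarith [hr.2, pi_pos])
    have hC : 0 < cos r := Real.cos_pos_of_mem_Ioo ⟨by linarith [hr.1, pi_pos], hr.2⟩
    have ha : 0 < A r := hApos r hr
    have hkey : A r * cos r ≤ p * sin r ^ n := by
      have h1 := key_bound n hn1 hr
      have h2 : A r * cos r ≤ sin r ^ n / n := by
        rw [← le_div_iff₀ hC]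
        refine h1.trans (le_of_eq ?_)
        rw [div_div]
      refine h2.trans ?_
      have hnpos : (0:ℝ) < n := by linarith
      rw [hp, div_mul_eq_mul_div, div_le_div_iff₀ hnpos hnpos]
      nlinarith [mul_nonneg (pow_nonneg hs.le n) hnpos.le]
    have hap : A r ^ p = A r ^ (p - 1) * A r := by
      rw [← Real.rpow_add_one ha.ne']; ring_nf
    rw [hap]
    have hq := Real.rpow_pos_of_pos ha (p-1)
    have hpow : sin r ^ (n - 1) * sin r = sin r ^ n := by
      rw [← pow_succ, Nat.sub_add_cancel hn1]
    have heq : sin r ^ (n-1) * p * A r ^ (p - 1) * (sin r)⁻¹ +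
        A r ^ (p-1) * A r * (-(cos r) / sin r ^ 2)
        = A r ^ (p-1) * ((p * (sin r ^ (n-1) * sin r) - A r * cos r) / sin r ^ 2) := by
      field_simp
      ring
    rw [heq, hpow]
    apply mul_nonneg hq.le
    apply div_nonneg _ (by positivity)
    linarith [hkey]
  have hmono : MonotoneOn g (Set.Ioo 0 (π/2)) := by
    apply monotoneOn_of_deriv_nonneg (convex_Ioo _ _)
    · intro r hr
      exact ((hDeriv r hr).differentiableAt.continuousAt).continuousWithinAt
    · rw [interior_Ioo]
      intro r hr
      exact (hDeriv r hr).differentiableAt.differentiableWithinAt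
    · rw [interior_Ioo]
      intro r hr
      rw [(hDeriv r hr).deriv]
      exact hDnonneg r hr
  exact hmono
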